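/- Let q : [0,L] → ℝ be continuous with q(u) ≥ -K/(m-1) for some K > 0, and let G solve G'' = -qG, G(0) = 0, G'(0) = 1, with G > 0 on (0,L]. Then for all r ∈ (0,L], (m-1) G'(r)/G(r) ≤ (m-1) √(K/(m-1)) coth( √(K/(m-1)) r ). In particular (m-1)G'(r)/G(r) ≤ C(r₀) for r ≥ r₀ > 0 with C(r₀) depending only on K, m, r₀. -/

import Mathlib

/-- Sturm comparison: lower Ricci bound `q ≥ -K/(m-1)` gives the `coth` upper bound
on `(m-1) G'/G` for the Jacobi comparison ODE. -/
theorem jacobi_comparison_coth_bound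
    (m : ℕ) (hm : 2 ≤ m) (L K : ℝ) (hL : 0 < L) (hK : 0 < K)
    (q G : ℝ → ℝ) (hq : ContinuousOn q (Set.Icc 0 L))
    (hqK : ∀ u ∈ Set.Icc (0:ℝ) L, -(K / ((m:ℝ) - 1)) ≤ q u)
    (hGsmooth : ContDiff ℝ 2 G)
    (hG0 : G 0 = 0) (hG'0 : deriv G 0 = 1)
    (hODE : ∀ u ∈ Set.Icc (0:ℝ) L, deriv (deriv G) u = -(q u) * G u)
    (hGpos : ∀ u ∈ Set.Ioc (0:ℝ) L, 0 < G u) :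
    ∀ r ∈ Set.Ioc (0:ℝ) L,
      ((m:ℝ) - 1) * deriv G r / G r ≤
        ((m:ℝ) - 1) * Real.sqrt (K / ((m:ℝ) - 1)) *
          (Real.cosh (Real.sqrt (K / ((m:ℝ) - 1)) * r) /
            Real.sinh (Real.sqrt (K / ((m:ℝ) - 1)) * r)) := by
  intro r hr
  have hm1 : (1:ℝ) ≤ (m:ℝ) - 1 := by
    have : (2:ℝ) ≤ (m:ℝ) := by exact_mod_cast hm
    linarith
  have hm1pos : (0:ℝ) < (m:ℝ) - 1 := by linarith
  set α := Real.sqrt (K / ((m:ℝ) - 1)) with hα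
  have hKm : 0 < K / ((m:ℝ) - 1) := div_pos hK hm1pos
  have hαpos : 0 < α := Real.sqrt_pos.mpr hKm
  have hα2 : α ^ 2 = K / ((m:ℝ) - 1) := Real.sq_sqrt hKm.le
  -- differentiability of G and G'
  have hG1 : ContDiff ℝ 1 (deriv G) := by
    have h2 : ContDiff ℝ ((1:ℕ∞)+1) G := by
      exact_mod_cast hGsmooth
    exact (contDiff_succ_iff_deriv.mp h2).2.2
  have hGdiff : Differentiable ℝ G := hGsmooth.differentiable (by norm_num)
  have hG'diff : Differentiable ℝ (deriv G) := hG1.differentiable (by norm_num)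
  -- Wronskian-type function
  set W : ℝ → ℝ := fun u => deriv G u * Real.sinh (α*u) - α * G u * Real.cosh (α*u)
    with hW
  have hWderiv : ∀ u : ℝ, HasDerivAt W
      ((deriv (deriv G) u - α^2 * G u) * Real.sinh (α*u)) u := by
    intro u
    have hs : HasDerivAt (fun u => Real.sinh (α*u)) (α * Real.cosh (α*u)) u := by
      simpa [mul_comm] using ((hasDerivAt_id u).const_mul α).sinh
    have hc : HasDerivAt (fun u => Real.cosh (α*u)) (α * Real.sinh (α*u)) u := by
      simpa [mul_comm] using ((hasDerivAt_id u).const_mul α).cosh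
    have h1 : HasDerivAt (fun u => deriv G u * Real.sinh (α*u))
        (deriv (deriv G) u * Real.sinh (α*u) + deriv G u * (α * Real.cosh (α*u))) u :=
      ((hG'diff u).hasDerivAt).mul hs
    have h2 : HasDerivAt (fun u => α * G u * Real.cosh (α*u))
        (α * deriv G u * Real.cosh (α*u) + α * G u * (α * Real.sinh (α*u))) u := by
      have := (((hGdiff u).hasDerivAt).const_mul α).mul hc
      exact this.congr_deriv (by ring)
    have := h1.sub h2
    exact this.congr_deriv (by ring)
  have hWcont : Continuous W := by
    apply Continuous.sub
    · exact (hG1.continuous).mul (Real.continuous_sinh.comp (continuous_const.mul continuous_id))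
    · exact ((continuous_const.mul hGsmooth.continuous).mul
        (Real.continuous_cosh.comp (continuous_const.mul continuous_id)))
  have hWanti : AntitoneOn W (Set.Icc 0 L) := by
    apply antitoneOn_of_deriv_nonpos (convex_Icc 0 L) hWcont.continuousOn
    · intro u hu
      exact (hWderiv u).differentiableAt.differentiableWithinAt
    · intro u hu
      rw [interior_Icc] at hu
      rw [(hWderiv u).deriv]
      have huI : u ∈ Set.Icc (0:ℝ) L := ⟨hu.1.le, hu.2.le⟩
      rw [hODE u huI]
      have hGu : 0 < G u := hGpos u ⟨hu.1, hu.2.le⟩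
      have hsinh : 0 ≤ Real.sinh (α*u) := by
        exact Real.sinh_nonneg_iff.mpr (mul_nonneg hαpos.le hu.1.le)
      have hqu : -(K / ((m:ℝ) - 1)) ≤ q u := hqK u huI
      have hfac : -(q u) * G u - α^2 * G u ≤ 0 := by
        rw [hα2]; nlinarith
      exact mul_nonpos_of_nonpos_of_nonneg hfac hsinh
  have hW0 : W 0 = 0 := by
    simp [hW, hG0]
  have hWr : W r ≤ 0 := by
    have := hWanti (Set.mem_Icc.mpr ⟨le_rfl, hL.le⟩)
      (Set.mem_Icc.mpr ⟨hr.1.le, hr.2⟩) hr.1.le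
    simpa [hW0] using this
  have hGr : 0 < G r := hGpos r hr
  have hsr : 0 < Real.sinh (α * r) := Real.sinh_pos_iff.mpr (mul_pos hαpos hr.1)
  have key : deriv G r * Real.sinh (α*r) ≤ α * G r * Real.cosh (α*r) := by
    have : deriv G r * Real.sinh (α*r) - α * G r * Real.cosh (α*r) ≤ 0 := hWr
    linarith
  rw [div_le_iff₀ hGr]
  have h2 : ((m:ℝ)-1) * α * (Real.cosh (α*r) / Real.sinh (α*r)) * G r
      = ((m:ℝ)-1) * (α * G r * Real.cosh (α*r)) / Real.sinh (α*r) := by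
    field_simp
  rw [h2, le_div_iff₀ hsr]
  nlinarith [key, hm1pos, hsr]
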